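/- (Gallai–Roy) If G is a graph with chromatic number k+1, then every orientation of G contains a directed path with k edges (i.e., on k+1 vertices). -/

import Mathlib

/-- `R` is an orientation of the simple graph `G`: every directed edge lies on an
edge of `G`, every edge of `G` is directed one way, and no edge is directed both ways. -/
def IsOrientation {V : Type*} (G : SimpleGraph V) (R : V → V → Prop) : Prop :=
  (∀ u v, R u v → G.Adj u v) ∧ (∀ u v, G.Adj u v → R u v ∨ R v u) ∧
    (∀ u v, R u v → ¬ R v u)

/-- The digraph `R` contains a copy of the digraph `S`. -/
def HasCopy {V W : Type*} (R : V → V → Prop) (S : W → W → Prop) : Prop :=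
  ∃ f : W → V, Function.Injective f ∧ ∀ a b, S a b → R (f a) (f b)

/-- A digraph is acyclic if it has no directed cycle. -/
def DigraphAcyclic {V : Type*} (R : V → V → Prop) : Prop :=
  ∀ v, ¬ Relation.TransGen R v v

/-- `G → S` : every orientation of `G` contains a copy of the oriented graph `S`. -/
def ArrowsOriented {V W : Type*} (G : SimpleGraph V) (S : W → W → Prop) : Prop :=
  ∀ R : V → V → Prop, IsOrientation G R → HasCopy R S

/-- The oriented Ramsey number of an oriented graph `S`. -/
noncomputable def orientedRamsey {W : Type*} (S : W → W → Prop) : ℕ :=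
  sInf {n : ℕ | ∃ G : SimpleGraph (Fin n), ArrowsOriented G S}

section Aux

variable {V : Type*}

/-- There is a directed walk of length `n` in `D` starting at `v`. -/
def HWalk (D : V → V → Prop) (v : V) (n : ℕ) : Prop :=
  ∃ g : ℕ → V, g 0 = v ∧ ∀ i < n, D (g i) (g (i + 1))

theorem HWalk.zero (D : V → V → Prop) (v : V) : HWalk D v 0 :=
  ⟨fun _ => v, rfl, fun i hi => absurd hi (Nat.not_lt_zero i)⟩

theorem HWalk.prepend {D : V → V → Prop} {u v : V} {n : ℕ} (h : D u v)
    (hw : HWalk D v n) : HWalk D u (n + 1) := by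
  obtain ⟨g, hg0, hg⟩ := hw
  refine ⟨fun i => match i with | 0 => u | (m+1) => g m, rfl, ?_⟩
  intro i hi
  match i with
  | 0 => show D u (g 0); rw [hg0]; exact h
  | (m+1) => exact hg m (by omega)

theorem HWalk.trunc {D : V → V → Prop} {v : V} {n m : ℕ} (hmn : m ≤ n)
    (hw : HWalk D v n) : HWalk D v m := by
  obtain ⟨g, hg0, hg⟩ := hw
  exact ⟨g, hg0, fun i hi => hg i (lt_of_lt_of_le hi hmn)⟩

theorem walk_transGen {D : V → V → Prop} (g : ℕ → V) {n : ℕ}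
    (hg : ∀ i < n, D (g i) (g (i + 1))) :
    ∀ i j : ℕ, i < j → j ≤ n → Relation.TransGen D (g i) (g j) := by
  intro i j hij hjn
  induction j with
  | zero => omega
  | succ m ih =>
    rcases Nat.lt_succ_iff_lt_or_eq.mp hij with h | h
    · exact (ih h (by omega)).tail (hg m (by omega))
    · subst h; exact Relation.TransGen.single (hg i (by omega))

theorem copy_of_walk {D R : V → V → Prop} {k : ℕ} (hac : DigraphAcyclic D)
    (hDR : ∀ a b, D a b → R a b) {v : V} (h : HWalk D v k) :
    HasCopy R (fun i j : Fin (k + 1) => (i : ℕ) + 1 = (j : ℕ)) := by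
  obtain ⟨g, -, hg⟩ := h
  have htg := walk_transGen g hg
  refine ⟨fun i => g i, ?_, ?_⟩
  · intro i j hij
    replace hij : g (i : ℕ) = g (j : ℕ) := hij
    by_contra hne
    have hvne : (i : ℕ) ≠ (j : ℕ) := fun hh => hne (Fin.ext hh)
    rcases lt_or_gt_of_ne hvne with hlt | hlt
    · have := htg i j hlt (by omega)
      rw [hij] at this
      exact hac _ this
    · have := htg j i hlt (by omega)
      rw [hij] at this
      exact hac _ this
  · intro a b hab
    have ha : (a : ℕ) < k := by have := b.isLt; omega
    have : D (g a) (g ((a : ℕ) + 1)) := hg a ha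
    rw [hab] at this
    exact hDR _ _ this

theorem chain_union_acyclic {c : Set (Set (V × V))} (hc : IsChain (· ⊆ ·) c)
    (h : ∀ D ∈ c, DigraphAcyclic fun a b => (a, b) ∈ D) :
    DigraphAcyclic fun a b => (a, b) ∈ ⋃₀ c := by
  have key : ∀ x y : V, Relation.TransGen (fun a b => (a, b) ∈ ⋃₀ c) x y →
      ∃ D ∈ c, Relation.TransGen (fun a b => (a, b) ∈ D) x y := by
    intro x y hxy
    induction hxy with
    | single hd =>
      obtain ⟨D, hD, hp⟩ := hd
      exact ⟨D, hD, Relation.TransGen.single hp⟩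
    | tail h₁ hd ih =>
      obtain ⟨D₁, hD₁, t⟩ := ih
      obtain ⟨D₂, hD₂, hp⟩ := hd
      rcases hc.total hD₁ hD₂ with hsub | hsub
      · exact ⟨D₂, hD₂, (Relation.TransGen.mono (fun a b hab => hsub hab) _ _ t).tail hp⟩
      · exact ⟨D₁, hD₁, t.tail (hsub hp)⟩
  intro w hw
  obtain ⟨D, hD, t⟩ := key w w hw
  exact h D hD w t

theorem cycle_extract {D : V → V → Prop} {u v : V} (hD : DigraphAcyclic D)
    {w : V} (h : Relation.TransGen (fun a b => D a b ∨ (a = u ∧ b = v)) w w) :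
    Relation.ReflTransGen D v u := by
  have key : ∀ x y : V, Relation.TransGen (fun a b => D a b ∨ (a = u ∧ b = v)) x y →
      Relation.TransGen D x y ∨
        (Relation.ReflTransGen D x u ∧ Relation.ReflTransGen D v y) := by
    intro x y hxy
    induction hxy with
    | single hd =>
      rcases hd with hd | ⟨rfl, rfl⟩
      · exact Or.inl (Relation.TransGen.single hd)
      · exact Or.inr ⟨Relation.ReflTransGen.refl, Relation.ReflTransGen.refl⟩
    | tail h₁ hd ih =>
      rcases hd with hd | ⟨rfl, rfl⟩
      · rcases ih with ht | ⟨h₂, h₃⟩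
        · exact Or.inl (ht.tail hd)
        · exact Or.inr ⟨h₂, h₃.tail hd⟩
      · rcases ih with ht | ⟨h₂, h₃⟩
        · exact Or.inr ⟨ht.to_reflTransGen, Relation.ReflTransGen.refl⟩
        · exact Or.inr ⟨h₂, Relation.ReflTransGen.refl⟩
  rcases key w w h with ht | ⟨h₂, h₃⟩
  · exact absurd ht (hD w)
  · exact h₃.trans h₂

end Aux

/-- Gallai–Roy: if `χ(G) = k+1` then every orientation of `G` contains a directed
path with `k` edges (on `k+1` vertices). -/
theorem stmt_4 {V : Type*} (G : SimpleGraph V) (k : ℕ)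
    (hchi : G.chromaticNumber = (k + 1 : ℕ)) :
    ∀ R : V → V → Prop, IsOrientation G R →
      HasCopy R (fun i j : Fin (k + 1) => (i : ℕ) + 1 = (j : ℕ)) := by
  intro R hR
  by_contra hcopy
  -- a maximal acyclic subdigraph of R
  set F : Set (Set (V × V)) :=
    {D | (∀ p ∈ D, R p.1 p.2) ∧ DigraphAcyclic fun a b => (a, b) ∈ D} with hF
  obtain ⟨M, hM⟩ : ∃ M, Maximal (· ∈ F) M := by
    apply zorn_subset
    intro c hcF hchain
    refine ⟨⋃₀ c, ⟨?_, ?_⟩, fun s hs => Set.subset_sUnion_of_mem hs⟩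
    · rintro p ⟨D, hD, hp⟩
      exact (hcF hD).1 p hp
    · exact chain_union_acyclic hchain (fun D hD => (hcF hD).2)
  set D : V → V → Prop := fun a b => (a, b) ∈ M with hDdef
  have hDR : ∀ a b, D a b → R a b := fun a b h => hM.prop.1 _ h
  have hDac : DigraphAcyclic D := hM.prop.2
  -- all walks in D are shorter than k
  have hb : ∀ v n, HWalk D v n → n < k := by
    intro v n hw
    by_contra hn
    exact hcopy (copy_of_walk hDac hDR (hw.trunc (by omega)))
  -- the coloring
  set f : V → ℕ := fun v => sSup {n | HWalk D v n} with hfdef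
  have hbdd : ∀ v, BddAbove {n | HWalk D v n} :=
    fun v => ⟨k, fun n hn => le_of_lt (hb v n hn)⟩
  have hmemf : ∀ v, HWalk D v (f v) :=
    fun v => Nat.sSup_mem ⟨0, by exact HWalk.zero D v⟩ (hbdd v)
  have hstep : ∀ a b, D a b → f b < f a := by
    intro a b h
    have : HWalk D a (f b + 1) := (hmemf b).prepend h
    exact Nat.lt_of_succ_le (le_csSup (hbdd a) this)
  have htrans : ∀ a b, Relation.TransGen D a b → f b < f a := by
    intro a b h
    induction h with
    | single h => exact hstep _ _ h
    | tail h₁ h₂ ih => exact (hstep _ _ h₂).trans ih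
  -- maximality: non-edges of D close up
  have hmax : ∀ u v, R u v → ¬ D u v → Relation.ReflTransGen D v u := by
    intro u v hr hnd
    have hins : insert (u, v) M ∉ F := by
      intro hmem
      exact hnd (hM.2 hmem (Set.subset_insert _ _) (Set.mem_insert _ _))
    have hsubR : ∀ p ∈ insert (u, v) M, R p.1 p.2 := by
      rintro p hp
      rcases hp with rfl | hp
      · exact hr
      · exact hM.prop.1 p hp
    have hnotac : ¬ DigraphAcyclic fun a b => (a, b) ∈ insert (u, v) M := by
      intro hac
      exact hins ⟨hsubR, hac⟩
    rw [DigraphAcyclic] at hnotac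
    push_neg at hnotac
    obtain ⟨w, hw⟩ := hnotac
    have hw' : Relation.TransGen (fun a b => D a b ∨ (a = u ∧ b = v)) w w := by
      refine Relation.TransGen.mono ?_ _ _ hw
      rintro a b (hab | hab)
      · right
        exact ⟨congrArg Prod.fst hab, congrArg Prod.snd hab⟩
      · left; exact hab
    exact cycle_extract hDac hw'
  have hprop : ∀ u v, R u v → f u ≠ f v := by
    intro u v hr
    by_cases hd : D u v
    · exact (hstep _ _ hd).ne'
    · have hrt := hmax u v hr hd
      have hne : v ≠ u := fun h => (hR.1 u v hr).ne h.symm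
      rcases (Relation.reflTransGen_iff_eq_or_transGen.mp hrt) with h | h
      · exact absurd h.symm hne
      · exact (htrans _ _ h).ne
  have hfk : ∀ v, f v < k := fun v => hb v (f v) (hmemf v)
  have hcol : G.Colorable k := by
    refine ⟨SimpleGraph.Coloring.mk (fun v => ⟨f v, hfk v⟩) ?_⟩
    intro u v hadj hEq
    have : f u ≠ f v := by
      rcases hR.2.1 u v hadj with h | h
      · exact hprop u v h
      · exact (hprop v u h).symm
    exact this (by simpa [Fin.ext_iff] using hEq)
  have hle : G.chromaticNumber ≤ k := hcol.chromaticNumber_le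
  rw [hchi] at hle
  have : (k + 1 : ℕ) ≤ k := by exact_mod_cast hle
  omega
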